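/- Let x : ℤ → ℝ be a sequence with 1 ≤ x_i ≤ 2 for all i ∈ ℤ (viewed as complex weights). Then C*({T_x}) = C*({T} ∪ {X_i : i ∈ ℤ}), i.e. the smallest closed unital star-subalgebra of the bounded operators on ℓ²(ℤ) containing the weighted shift T_x coincides with the smallest closed unital star-subalgebra containing the bilateral shift T together with all the diagonal operators X_i. -/

import Mathlib

/-- The Hilbert space ℓ²(ℤ) of square-summable complex sequences. -/
noncomputable abbrev H : Type := lp (fun _ : ℤ => ℂ) 2

/-- `C*(S)`: the smallest closed unital star-subalgebra of the bounded operators on ℓ²(ℤ)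
containing `S`. -/
noncomputable def Cstar (S : Set (H →L[ℂ] H)) : StarSubalgebra ℂ (H →L[ℂ] H) :=
  (StarAlgebra.adjoin ℂ S).topologicalClosure

open scoped ComplexConjugate ENNReal NNReal

lemma Hext {f g : H} (h : ∀ n, f n = g n) : f = g := lp.ext (funext h)

lemma memℓp_of_bound (g : ℤ → ℂ) (f : H) (C : ℝ) (hC : 0 ≤ C)
    (h : ∀ n, ‖g n‖ ≤ C * ‖f n‖) : Memℓp g 2 := by
  apply memℓp_gen
  have hf : Summable (fun n : ℤ => ‖f n‖ ^ (2 : ℝ≥0∞).toReal) :=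
    (lp.memℓp f).summable (by norm_num)
  refine Summable.of_nonneg_of_le (fun n => Real.rpow_nonneg (norm_nonneg _) _)
    (fun n => ?_) (hf.mul_left (C ^ (2 : ℝ≥0∞).toReal))
  calc ‖g n‖ ^ (2 : ℝ≥0∞).toReal ≤ (C * ‖f n‖) ^ (2 : ℝ≥0∞).toReal := by
        apply Real.rpow_le_rpow (norm_nonneg _) (h n) (by norm_num)
    _ = C ^ (2 : ℝ≥0∞).toReal * ‖f n‖ ^ (2 : ℝ≥0∞).toReal :=
        Real.mul_rpow hC (norm_nonneg _)

/-- norm bound from pointwise bound -/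
lemma Hnorm_le (g : H) (f : H) (C : ℝ) (hC : 0 ≤ C)
    (h : ∀ n, ‖g n‖ ≤ C * ‖f n‖) : ‖g‖ ≤ C * ‖f‖ := by
  have hp : (0:ℝ) < (2 : ℝ≥0∞).toReal := by norm_num
  refine lp.norm_le_of_tsum_le hp (mul_nonneg hC (norm_nonneg _)) ?_
  have hf : Summable (fun n : ℤ => ‖f n‖ ^ (2 : ℝ≥0∞).toReal) :=
    (lp.memℓp f).summable hp
  calc ∑' n : ℤ, ‖g n‖ ^ (2 : ℝ≥0∞).toReal
      ≤ ∑' n : ℤ, C ^ (2 : ℝ≥0∞).toReal * ‖f n‖ ^ (2 : ℝ≥0∞).toReal := by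
        refine Summable.tsum_le_tsum (fun n => ?_) ?_ (hf.mul_left _)
        · calc ‖g n‖ ^ (2 : ℝ≥0∞).toReal ≤ (C * ‖f n‖) ^ (2 : ℝ≥0∞).toReal :=
                Real.rpow_le_rpow (norm_nonneg _) (h n) (by norm_num)
            _ = _ := Real.mul_rpow hC (norm_nonneg _)
        · exact Summable.of_nonneg_of_le (fun n => Real.rpow_nonneg (norm_nonneg _) _)
            (fun n => le_trans (Real.rpow_le_rpow (norm_nonneg _) (h n) (by norm_num))
              (le_of_eq (Real.mul_rpow hC (norm_nonneg _)))) (hf.mul_left _)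
    _ = C ^ (2 : ℝ≥0∞).toReal * ∑' n : ℤ, ‖f n‖ ^ (2 : ℝ≥0∞).toReal := tsum_mul_left
    _ = (C * ‖f‖) ^ (2 : ℝ≥0∞).toReal := by
        rw [← lp.norm_rpow_eq_tsum hp, Real.mul_rpow hC (norm_nonneg _)]

/-- the diagonal operator with bounded weights -/
noncomputable def diagOp (b : ℤ → ℂ) (C : ℝ) (hC : 0 ≤ C) (hb : ∀ n, ‖b n‖ ≤ C) :
    H →L[ℂ] H :=
  LinearMap.mkContinuous
    { toFun := fun f => (⟨fun n => b n * f n,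
        memℓp_of_bound _ f C hC fun n => by
          calc ‖b n * f n‖ = ‖b n‖ * ‖f n‖ := norm_mul _ _
            _ ≤ C * ‖f n‖ := by gcongr; exact hb n⟩ : H)
      map_add' := fun f g => Hext fun n => by
        simp [lp.coeFn_add, mul_add]; rfl
      map_smul' := fun c f => Hext fun n => by
        simp [lp.coeFn_smul, Pi.smul_apply, smul_eq_mul]; ring }
    C
    (fun f => by
      refine Hnorm_le _ f C hC fun n => ?_
      calc ‖b n * f n‖ = ‖b n‖ * ‖f n‖ := norm_mul _ _
        _ ≤ C * ‖f n‖ := by gcongr; exact hb n)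

@[simp] lemma diagOp_apply (b : ℤ → ℂ) (C : ℝ) (hC : 0 ≤ C) (hb : ∀ n, ‖b n‖ ≤ C)
    (f : H) (n : ℤ) : diagOp b C hC hb f n = b n * f n := rfl

lemma memℓp_shift (f : H) : Memℓp (fun n : ℤ => f (n + 1)) 2 := by
  apply memℓp_gen
  have hf : Summable (fun n : ℤ => ‖f n‖ ^ (2 : ℝ≥0∞).toReal) :=
    (lp.memℓp f).summable (by norm_num)
  exact ((Equiv.addRight (1 : ℤ)).summable_iff
    (f := fun n : ℤ => ‖f n‖ ^ (2 : ℝ≥0∞).toReal)).2 hf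

/-- the backward shift operator -/
noncomputable def shiftOp : H →L[ℂ] H :=
  LinearMap.mkContinuous
    { toFun := fun f => (⟨fun n => f (n + 1), memℓp_shift f⟩ : H)
      map_add' := fun f g => Hext fun n => by simp [lp.coeFn_add]; rfl
      map_smul' := fun c f => Hext fun n => by simp [lp.coeFn_smul] }
    1
    (fun f => by
      have hp : (0:ℝ) < (2 : ℝ≥0∞).toReal := by norm_num
      refine lp.norm_le_of_tsum_le hp (by simpa using norm_nonneg f) ?_
      have : ∑' n : ℤ, ‖f (n + 1)‖ ^ (2 : ℝ≥0∞).toReal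
          = ∑' n : ℤ, ‖f n‖ ^ (2 : ℝ≥0∞).toReal :=
        (Equiv.addRight (1 : ℤ)).tsum_eq (fun n : ℤ => ‖f n‖ ^ (2 : ℝ≥0∞).toReal)
      refine le_of_eq ?_
      calc ∑' (i : ℤ), ‖(⟨fun n => f (n+1), memℓp_shift f⟩ : H) i‖ ^ (2 : ℝ≥0∞).toReal
          = ∑' n : ℤ, ‖f n‖ ^ (2 : ℝ≥0∞).toReal := this
        _ = (1 * ‖f‖) ^ (2 : ℝ≥0∞).toReal := by rw [← lp.norm_rpow_eq_tsum hp, one_mul])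

@[simp] lemma shiftOp_apply (f : H) (n : ℤ) : shiftOp f n = f (n + 1) := rfl

local notation "⟪" a ", " b "⟫" => @inner ℂ _ _ a b

lemma op_ext {P Q : H →L[ℂ] H} (h : ∀ (f : H) (n : ℤ), P f n = Q f n) : P = Q :=
  ContinuousLinearMap.ext fun f => Hext (h f)

lemma op_ext_inner {P Q : H →L[ℂ] H} (h : ∀ f g : H, ⟪f, P g⟫ = ⟪f, Q g⟫) : P = Q :=
  ContinuousLinearMap.ext fun g => ext_inner_left ℂ (fun v => h v g)

lemma H_inner (f g : H) : ⟪f, g⟫ = ∑' n : ℤ, conj (f n) * g n := by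
  rw [lp.inner_eq_tsum]
  simp [RCLike.inner_apply]
  exact tsum_congr fun n => mul_comm _ _

lemma star_T_eq (T : H →L[ℂ] H) (hT : ∀ (f : H) (n : ℤ), T f n = f (n - 1)) :
    star T = shiftOp := by
  rw [ContinuousLinearMap.star_eq_adjoint]
  refine ((ContinuousLinearMap.eq_adjoint_iff shiftOp T).mpr fun f g => ?_).symm
  rw [H_inner, H_inner]
  calc ∑' n : ℤ, conj (shiftOp f n) * g n
      = ∑' n : ℤ, conj (f (n + 1)) * g ((n + 1) - 1) := by
        exact tsum_congr fun n => by rw [shiftOp_apply, add_sub_cancel_right]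
    _ = ∑' n : ℤ, conj (f n) * g (n - 1) :=
        (Equiv.addRight (1 : ℤ)).tsum_eq (fun n : ℤ => conj (f n) * g (n - 1))
    _ = ∑' n : ℤ, conj (f n) * T g n := tsum_congr fun n => by rw [hT]

section XStuff

variable (x : ℤ → ℝ) (Tx : H →L[ℂ] H) (D : H →L[ℂ] H)
  (hTx : ∀ (f : H) (n : ℤ), Tx f n = (x (n - 1) : ℂ) * f (n - 1))
  (hD : ∀ (f : H) (j : ℤ), D f j = (x j : ℂ) * f j)

include hD in
lemma D_selfAdjoint : IsSelfAdjoint D := by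
  rw [ContinuousLinearMap.isSelfAdjoint_iff_isSymmetric]
  intro f g
  simp only [ContinuousLinearMap.coe_coe]
  rw [H_inner, H_inner]
  refine tsum_congr fun n => ?_
  rw [hD, hD, map_mul, Complex.conj_ofReal]
  ring

include hTx hD in
lemma starTx_mul_Tx : star Tx * Tx = D * D := by
  refine op_ext_inner fun f g => ?_
  rw [ContinuousLinearMap.mul_apply, ContinuousLinearMap.mul_apply,
    ContinuousLinearMap.star_eq_adjoint, ContinuousLinearMap.adjoint_inner_right]
  have hDsa := D_selfAdjoint x D hD
  have h4 := ContinuousLinearMap.adjoint_inner_right D f (D g)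
  rw [hDsa.adjoint_eq] at h4
  rw [h4, H_inner, H_inner]
  calc ∑' n : ℤ, conj (Tx f n) * Tx g n
      = ∑' n : ℤ, conj ((x ((n+1) - 1) : ℂ) * f ((n+1) - 1)) * ((x ((n+1) - 1) : ℂ) * g ((n+1) - 1)) := by
        refine ((Equiv.addRight (1 : ℤ)).tsum_eq
          (fun n : ℤ => conj (Tx f n) * Tx g n)).symm.trans ?_
        exact tsum_congr fun n => by rw [Equiv.coe_addRight, hTx, hTx]
    _ = ∑' n : ℤ, conj (D f n) * D g n := by
        refine tsum_congr fun n => ?_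
        rw [hD, hD, add_sub_cancel_right]

include hD in
lemma D_nonneg (hx : ∀ i, 1 ≤ x i) : 0 ≤ D := by
  rw [ContinuousLinearMap.nonneg_iff_isPositive]
  refine ⟨(D_selfAdjoint x D hD).isSymmetric, fun f => ?_⟩
  have h1 : HasSum (fun n : ℤ => conj (D f n) * f n) ⟪D f, f⟫ := by
    have := lp.hasSum_inner (𝕜 := ℂ) (D f) f
    simpa [RCLike.inner_apply, mul_comm] using this
  have h2 : HasSum (fun n : ℤ => Complex.re (conj (D f n) * f n)) (Complex.re ⟪D f, f⟫) :=
    h1.mapL Complex.reCLM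
  have h3 : ∀ n : ℤ, Complex.re (conj (D f n) * f n) = x n * Complex.normSq (f n) := by
    intro n
    rw [hD, map_mul, Complex.conj_ofReal, mul_assoc, ← Complex.normSq_eq_conj_mul_self]
    simp
  have h4 : Complex.re ⟪D f, f⟫ = ∑' n : ℤ, x n * Complex.normSq (f n) := by
    rw [← h2.tsum_eq]
    exact tsum_congr h3
  show 0 ≤ Complex.re ⟪D f, f⟫
  rw [h4]
  exact tsum_nonneg fun n => mul_nonneg (by linarith [hx n]) (Complex.normSq_nonneg _)

end XStuff

lemma cfc_mem_elemental' (a : H →L[ℂ] H) (f : ℂ → ℂ) :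
    cfc f a ∈ StarAlgebra.elemental ℂ a := by
  by_cases h1 : IsStarNormal a
  · by_cases h2 : ContinuousOn f (spectrum ℂ a)
    · rw [cfc_apply f a h1 h2, cfcHom_eq_of_isStarNormal]
      exact SetLike.coe_mem _
    · rw [cfc_apply_of_not_continuousOn a h2]
      exact zero_mem _
  · rw [cfc_apply_of_not_predicate a h1]
    exact zero_mem _

noncomputable instance : NonUnitalContinuousFunctionalCalculus ℝ (H →L[ℂ] H) IsSelfAdjoint :=
  IsSelfAdjoint.instNonUnitalContinuousFunctionalCalculus

noncomputable instance : ContinuousFunctionalCalculus ℝ (H →L[ℂ] H) IsSelfAdjoint :=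
  IsSelfAdjoint.instContinuousFunctionalCalculus

set_option synthInstance.maxHeartbeats 2000000 in
set_option maxHeartbeats 2000000 in
lemma sqrt_mem_closed (S : StarSubalgebra ℂ (H →L[ℂ] H)) (hS : IsClosed (S : Set (H →L[ℂ] H)))
    (a : H →L[ℂ] H) (ha : a ∈ S) (ha' : 0 ≤ a) : CFC.sqrt a ∈ S := by
  rw [CFC.sqrt_eq_cfc, cfc_nnreal_eq_real _ a ha']
  erw [cfc_real_eq_complex _ (IsSelfAdjoint.of_nonneg ha')]
  exact StarAlgebra.elemental.le_of_mem hS ha (cfc_mem_elemental' a _)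

lemma mem_Cstar {S : Set (H →L[ℂ] H)} {s : H →L[ℂ] H} (h : s ∈ S) : s ∈ Cstar S :=
  (StarSubalgebra.le_topologicalClosure _) (StarAlgebra.subset_adjoin ℂ S h)

lemma isClosed_Cstar (S : Set (H →L[ℂ] H)) : IsClosed ((Cstar S : StarSubalgebra ℂ (H →L[ℂ] H)) : Set (H →L[ℂ] H)) :=
  StarSubalgebra.isClosed_topologicalClosure _

lemma Cstar_le {S : Set (H →L[ℂ] H)} {B : StarSubalgebra ℂ (H →L[ℂ] H)}
    (hB : IsClosed (B : Set (H →L[ℂ] H))) (h : S ⊆ B) : Cstar S ≤ B :=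
  StarSubalgebra.topologicalClosure_minimal (StarAlgebra.adjoin_le h) hB


set_option synthInstance.maxHeartbeats 2000000 in
set_option maxHeartbeats 2000000 in
/-- For weights `x : ℤ → ℝ` with `1 ≤ x i ≤ 2`, the C*-algebra generated by the
weighted shift `T_x` coincides with the C*-algebra generated by the bilateral shift `T`
together with all the diagonal operators `X i = diag (j ↦ x (i+j))`. -/
theorem cstar_weighted_shift_eq_cstar_shift_and_diagonals
    (x : ℤ → ℝ) (hx : ∀ i, 1 ≤ x i ∧ x i ≤ 2)
    (Tx T : H →L[ℂ] H) (X : ℤ → H →L[ℂ] H)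
    (hTx : ∀ (f : H) (n : ℤ), Tx f n = (x (n - 1) : ℂ) * f (n - 1))
    (hT : ∀ (f : H) (n : ℤ), T f n = f (n - 1))
    (hX : ∀ (i : ℤ) (f : H) (j : ℤ), X i f j = (x (i + j) : ℂ) * f j) :
    Cstar {Tx} = Cstar ({T} ∪ Set.range X) := by
  have hxpos : ∀ i, (0:ℝ) < x i := fun i => lt_of_lt_of_le one_pos (hx i).1
  set A := Cstar {Tx} with hA
  have hAclosed : IsClosed ((A : StarSubalgebra ℂ (H →L[ℂ] H)) : Set (H →L[ℂ] H)) :=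
    isClosed_Cstar _
  have hTxA : Tx ∈ A := mem_Cstar rfl
  have hD : ∀ (f : H) (j : ℤ), X 0 f j = (x j : ℂ) * f j := by
    intro f j; rw [hX]; norm_num
  -- X 0 ∈ A via sqrt of Tx* Tx
  have hE : star Tx * Tx = X 0 * X 0 := starTx_mul_Tx x Tx (X 0) hTx hD
  have hD0 : 0 ≤ X 0 := D_nonneg x (X 0) hD (fun i => (hx i).1)
  have hsqrt : CFC.sqrt (star Tx * Tx) = X 0 := CFC.sqrt_unique hE.symm hD0
  have hEmem : star Tx * Tx ∈ A := mul_mem (star_mem hTxA) hTxA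
  have hDA : X 0 ∈ A :=
    hsqrt ▸ sqrt_mem_closed A hAclosed _ hEmem (star_mul_self_nonneg Tx)
  -- the inverse diagonal operator
  have hbinv : ∀ n : ℤ, ‖(((x n)⁻¹ : ℝ) : ℂ)‖ ≤ 1 := by
    intro n
    rw [Complex.norm_real, Real.norm_eq_abs, abs_of_nonneg (le_of_lt (inv_pos.2 (hxpos n)))]
    exact inv_le_one_of_one_le₀ (hx n).1
  set D' : H →L[ℂ] H := diagOp (fun n => (((x n)⁻¹ : ℝ) : ℂ)) 1 zero_le_one hbinv with hD'def
  have hD'apply : ∀ (f : H) (n : ℤ), D' f n = (((x n)⁻¹ : ℝ) : ℂ) * f n := fun f n => rfl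
  have hmulinv : ∀ n : ℤ, (x n : ℂ) * (((x n)⁻¹ : ℝ) : ℂ) = 1 := by
    intro n
    push_cast
    exact mul_inv_cancel₀ (by exact_mod_cast (hxpos n).ne')
  have hXD' : X 0 * D' = 1 := by
    refine op_ext fun f n => ?_
    rw [ContinuousLinearMap.mul_apply, hD, hD'apply, ← mul_assoc, hmulinv, one_mul,
      ContinuousLinearMap.one_apply]
  have hD'X : D' * X 0 = 1 := by
    refine op_ext fun f n => ?_
    rw [ContinuousLinearMap.mul_apply, hD'apply, hD, ← mul_assoc, mul_comm ((((x n)⁻¹ : ℝ) : ℂ)) ((x n : ℂ)), hmulinv, one_mul,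
      ContinuousLinearMap.one_apply]
  -- spectral permanence: D' ∈ A
  have hD'A : D' ∈ A := by
    haveI : IsClosed ((A : StarSubalgebra ℂ (H →L[ℂ] H)) : Set (H →L[ℂ] H)) := hAclosed
    have hUnit : IsUnit ((⟨X 0, hDA⟩ : A) : H →L[ℂ] H) :=
      ⟨⟨X 0, D', hXD', hD'X⟩, rfl⟩
    obtain ⟨u, hu⟩ := (StarSubalgebra.coe_isUnit (S := A)).mp hUnit
    have h2 : X 0 * (((u⁻¹ : Aˣ) : A) : H →L[ℂ] H) = 1 := by
      have h3 := u.mul_inv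
      rw [hu] at h3
      calc X 0 * (((u⁻¹ : Aˣ) : A) : H →L[ℂ] H)
          = (((⟨X 0, hDA⟩ : A) * ((u⁻¹ : Aˣ) : A) : A) : H →L[ℂ] H) := rfl
        _ = ((1 : A) : H →L[ℂ] H) := by rw [h3]
        _ = 1 := rfl
    have h4 : D' = (((u⁻¹ : Aˣ) : A) : H →L[ℂ] H) := by
      rw [← mul_one D', ← h2, ← mul_assoc, hD'X, one_mul]
    rw [h4]
    exact SetLike.coe_mem _
  -- T ∈ A
  have hTA : T ∈ A := by
    have hTeq : T = Tx * D' := by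
      refine op_ext fun f n => ?_
      rw [hT, ContinuousLinearMap.mul_apply, hTx, hD'apply, ← mul_assoc, hmulinv, one_mul]
    rw [hTeq]
    exact mul_mem hTxA hD'A
  -- conjugation identities
  have hstarT : star T = shiftOp := star_T_eq T hT
  have hXsucc : ∀ i : ℤ, X (i + 1) = star T * X i * T := by
    intro i
    rw [hstarT]
    refine op_ext fun f n => ?_
    simp only [ContinuousLinearMap.mul_apply, shiftOp_apply]
    rw [hX, hX, hT, add_sub_cancel_right, show i + (n + 1) = i + 1 + n from by ring]
  have hXpred : ∀ i : ℤ, X (i - 1) = T * X i * star T := by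
    intro i
    rw [hstarT]
    refine op_ext fun f n => ?_
    simp only [ContinuousLinearMap.mul_apply, shiftOp_apply]
    rw [hX (i-1) f n, hT, hX i (shiftOp f) (n-1), shiftOp_apply,
      show n - 1 + 1 = n from by ring, show i + (n - 1) = i - 1 + n from by ring]
  have hXA : ∀ i : ℤ, X i ∈ A := by
    intro i
    induction i using Int.induction_on with
    | zero => exact hDA
    | succ k ih =>
        rw [hXsucc (k : ℤ)]
        exact mul_mem (mul_mem (star_mem hTA) ih) hTA
    | pred k ih =>
        rw [show (-(k:ℤ) - 1) = (-(k:ℤ)) - 1 from rfl, hXpred (-(k:ℤ))]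
        exact mul_mem (mul_mem hTA ih) (star_mem hTA)
  -- conclusion
  have hTxeq : Tx = T * X 0 := by
    refine op_ext fun f n => ?_
    rw [hTx, ContinuousLinearMap.mul_apply, hT, hX, zero_add]
  refine le_antisymm ?_ ?_
  · refine Cstar_le (isClosed_Cstar _) ?_
    rw [Set.singleton_subset_iff, hTxeq]
    exact mul_mem (mem_Cstar (Set.mem_union_left _ rfl))
      (mem_Cstar (Set.mem_union_right _ ⟨0, rfl⟩))
  · refine Cstar_le hAclosed ?_
    rintro s (hs | ⟨i, rfl⟩)
    · rw [Set.mem_singleton_iff] at hs; subst hs; exact hTA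
    · exact hXA i
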